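/- arXiv:2411.11881 — 5 statements merged into one kernel-verified Lean document; each statement's English description precedes it below -/
import Mathlib

section
/- The sets A₂ and B are disjoint: A₂ ∩ B = ∅. -/
def A2 : Set (ℤ × ℤ) :=
  {p | ∃ m n : ℤ, 3 ≤ m ∧ 2 ≤ n ∧ Even n ∧
    p = (4 * m * n ^ 2 - 4 * (m + 2) * n + 8, m * n ^ 2 - n + 1)}

def B : Set (ℤ × ℤ) :=
  {p | ∃ n : ℤ, 4 ≤ n ∧ p = (2 * (n - 3) ^ 2, (n - 1) * (n - 2) / 2 + 1)}

theorem stmt_4 : A2 ∩ B = ∅ := by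
  rw [Set.eq_empty_iff_forall_notMem]
  rintro p ⟨⟨m, n, hm, hn, -, rfl⟩, k, hk4, hB⟩
  rw [Prod.mk.injEq] at hB
  obtain ⟨E1, E2⟩ := hB
  -- clear the integer division in E2
  have hpar : (k - 1) * (k - 2) % 2 = 0 := by
    rcases Int.even_or_odd k with h | h <;> obtain ⟨t, ht⟩ := h <;> subst ht <;> ring_nf <;> omega
  have E2' : 2 * (m * n ^ 2 - n + 1) = (k - 1) * (k - 2) + 2 := by
    have := Int.mul_ediv_add_emod ((k - 1) * (k - 2)) 2
    omega
  have hk : 3 * k = 2 * m * n + 2 * n + 3 := by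
    have h6 : 6 * k = 4 * m * n + 4 * n + 6 := by linear_combination E1 - 2 * E2'
    linarith
  have key : 2 * n * (m - 2) * (n * (2 * m - 1) - 3) = 0 := by
    linear_combination (-9 : ℤ) * E2' - (3 * k + 2 * m * n + 2 * n - 6) * hk
  nlinarith [key, mul_pos (mul_pos (by linarith : (0:ℤ) < 2 * n) (by linarith : (0:ℤ) < m - 2))
    (by nlinarith : (0:ℤ) < n * (2 * m - 1) - 3)]
end

section
/- The sets A₁ and A₂ are disjoint: A₁ ∩ A₂ = ∅. -/
def A1 : Set (ℤ × ℤ) :=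
  {p | ∃ n : ℤ, 2 ≤ n ∧ p = (4 * n ^ 2 - 12 * n + 9, n ^ 2 - n + 1)}

theorem stmt_5 : A1 ∩ A2 = ∅ := by
  ext p
  simp only [Set.mem_inter_iff, Set.mem_empty_iff_false, iff_false, A1, A2, Set.mem_setOf_eq,
    not_and]
  rintro ⟨a, ha, rfl⟩ ⟨m, n, hm, hn, ⟨k, rfl⟩, h⟩
  rw [Prod.mk.injEq] at h
  obtain ⟨h1, h2⟩ := h
  have h3 : 8 * a - 8 * ((m + 1) * k) = 1 := by linear_combination 4 * h2 - h1
  have h4 : (8 : ℤ) ∣ 1 := ⟨a - (m + 1) * k, by linarith⟩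
  norm_num at h4
end

section
/- The sets A₁ and A₃ are disjoint: A₁ ∩ A₃ = ∅. -/
def A3 : Set (ℤ × ℤ) :=
  {p | ∃ m n : ℤ, 2 ≤ m ∧ 4 ≤ n ∧ Even n ∧
    p = (2 * m * n ^ 2 - 4 * (m + 1) * n + 8, m * n * (n - 1) / 2 + 1)}

theorem stmt_6 : A1 ∩ A3 = ∅ := by
  ext p
  simp only [Set.mem_inter_iff, Set.mem_empty_iff_false, iff_false, not_and]
  rintro ⟨n, hn, rfl⟩ ⟨m, k, hm, hk, hke, hp⟩
  have h1 : 4 * n ^ 2 - 12 * n + 9 = 2 * m * k ^ 2 - 4 * (m + 1) * k + 8 :=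
    congrArg Prod.fst hp
  have hodd : Odd (4 * n ^ 2 - 12 * n + 9) := ⟨2 * n ^ 2 - 6 * n + 4, by ring⟩
  have heven : Even (2 * m * k ^ 2 - 4 * (m + 1) * k + 8) :=
    ⟨m * k ^ 2 - 2 * (m + 1) * k + 4, by ring⟩
  rw [h1] at hodd
  exact (Int.not_odd_iff_even.mpr heven) hodd
end

section
/- The set difference A₃ \ A₂ is infinite. -/
theorem stmt_12 : (A3 \ A2).Infinite := by
  apply Set.infinite_of_injective_forall_mem
    (f := fun k : ℕ => ((16 * ((k : ℤ) + 2) - 8, 6 * ((k : ℤ) + 2) + 1) : ℤ × ℤ))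
  · intro x y h
    simp only [Prod.mk.injEq] at h
    omega
  · intro k
    constructor
    · refine ⟨(k : ℤ) + 2, 4, by omega, by norm_num, ⟨2, by norm_num⟩, ?_⟩
      have : ((k : ℤ) + 2) * 4 * (4 - 1) / 2 = 6 * ((k : ℤ) + 2) := by omega
      simp only [Prod.mk.injEq]
      constructor
      · ring
      · rw [this]
    · rintro ⟨a, b, ha, hb, hbe, heq⟩
      simp only [Prod.mk.injEq] at heq
      obtain ⟨h1, h2⟩ := heq
      set m : ℤ := (k : ℤ) + 2 with hm
      have e2 : a * b ^ 2 = 6 * m + b := by linear_combination -h2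
      have e1 : 4 * (a * b) = 8 * m + 16 - 4 * b := by linear_combination h1 + 4 * e2
      have e1' : a * b = 2 * m + 4 - b := by linarith
      have key : b * (a * b) - 3 * (a * b) - 4 * b = -12 := by
        linear_combination e2 - 3 * e1'
      obtain ⟨c, hc⟩ := hbe
      have hdvd : b ∣ 12 := ⟨-(a * b - 3 * a - 4), by linear_combination key⟩
      have hb12 : b ≤ 12 := Int.le_of_dvd (by norm_num) hdvd
      interval_cases b <;> omega
end

section
/- The set difference A₂ \ A₃ is infinite. -/
theorem stmt_15 : (A2 \ A3).Infinite := by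
  apply Set.infinite_of_injective_forall_mem
    (f := fun k : ℕ => ((8 * (k + 3) - 8, 4 * (k + 3) - 1) : ℤ × ℤ))
  · intro a b hab
    simp only [Prod.mk.injEq] at hab
    omega
  · intro k
    constructor
    · exact ⟨(k : ℤ) + 3, 2, by omega, by omega, ⟨1, by ring⟩, by
        simp only [Prod.mk.injEq]; constructor <;> push_cast <;> ring⟩
    · rintro ⟨m', n', hm', hn', ⟨t, ht⟩, heq⟩
      simp only [Prod.mk.injEq] at heq
      obtain ⟨h1, h2⟩ := heq
      subst ht
      have hdiv : m' * (t + t) * (t + t - 1) / 2 = m' * t * (2 * t - 1) := by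
        have : m' * (t + t) * (t + t - 1) = 2 * (m' * t * (2 * t - 1)) := by ring
        rw [this, Int.mul_ediv_cancel_left _ (by norm_num)]
      rw [hdiv] at h2
      -- h1 : 8*(k+3) - 8 = 2*m'*(t+t)^2 - 4*(m'+1)*(t+t) + 8
      -- h2 : 4*(k+3) - 1 = m'*t*(2t-1) + 1
      set m : ℤ := (k : ℤ) + 3 with hm
      have hm3 : 3 ≤ m := by simp [hm]
      have ht2 : 2 ≤ t := by omega
      have e1 : m' * t * (t - 1) = m + t - 2 := by nlinarith [h1]
      have e2 : m' * t * (2 * t - 1) = 4 * m - 2 := by omega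
      have e3 : m' * t * t = 3 * m - t := by nlinarith
      have e4 : m' * t = 2 * m - 2 * t + 2 := by nlinarith
      have e5 : (m - t) * (2 * t - 3) = 0 := by nlinarith
      have hmt : m = t := by
        rcases mul_eq_zero.mp e5 with h | h
        · omega
        · omega
      nlinarith [e4, hm', ht2]
end
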